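/- Let n > 2 and 1 < p < ∞. Then for every s in the open probability simplex Δₙ°, ‖Diag(s) − s sᵀ‖_p < 1/2, yet sup_{s ∈ Δₙ°} ‖Diag(s) − s sᵀ‖_p = 1/2. In particular, there exists a sequence (s_k) ⊂ Δₙ° converging to a boundary point of the simplex with ‖Diag(s_k) − s_k s_kᵀ‖_p → 1/2, and the supremum is not attained in Δₙ°. -/

import Mathlib

open scoped ENNReal BigOperators

/-- The softmax function with inverse temperature `lam`. -/
noncomputable def softmax {n : ℕ} (lam : ℝ) (x : Fin n → ℝ) : Fin n → ℝ :=
  fun i => Real.exp (lam * x i) / ∑ j, Real.exp (lam * x j)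

/-- The ℓ_p norm on `Fin n → ℝ`, for `p ∈ [1, ∞]`. -/
noncomputable def lpNorm {n : ℕ} (p : ℝ≥0∞) (x : Fin n → ℝ) : ℝ :=
  if p = ⊤ then ⨆ i, |x i| else (∑ i, |x i| ^ p.toReal) ^ (1 / p.toReal)

/-- The ℓ_p-induced operator norm of a matrix. -/
noncomputable def opNorm {n m : ℕ} (p : ℝ≥0∞) (A : Matrix (Fin n) (Fin m) ℝ) : ℝ :=
  ⨆ v : {v : Fin m → ℝ // v ≠ 0}, lpNorm p (A.mulVec v.val) / lpNorm p v.val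

/-- The matrix `Diag(s) - s sᵀ` (Jacobian of softmax with `lam = 1` at a point with value `s`). -/
noncomputable def softmaxJac {n : ℕ} (s : Fin n → ℝ) : Matrix (Fin n) (Fin n) ℝ :=
  Matrix.diagonal s - Matrix.vecMulVec s s

/-- The open (interior of the) probability simplex. -/
def openSimplex (n : ℕ) : Set (Fin n → ℝ) :=
  {u | (∀ i, 0 < u i) ∧ ∑ i, u i = 1}

/-- The (closed) probability simplex. -/
def probSimplex (n : ℕ) : Set (Fin n → ℝ) :=
  {u | (∀ i, 0 ≤ u i) ∧ ∑ i, u i = 1}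
section aux
variable {n : ℕ}

lemma lpNorm_eq (p : ℝ≥0∞) (hp : p ≠ ⊤) (x : Fin n → ℝ) :
    lpNorm p x = (∑ i, |x i| ^ p.toReal) ^ (1 / p.toReal) := by
  simp [lpNorm, hp]

lemma lpNorm_nonneg (p : ℝ≥0∞) (hp : p ≠ ⊤) (x : Fin n → ℝ) : 0 ≤ lpNorm p x := by
  rw [lpNorm_eq p hp]
  exact Real.rpow_nonneg (Finset.sum_nonneg fun i _ => Real.rpow_nonneg (abs_nonneg _) _) _

lemma lpNorm_pos (p : ℝ≥0∞) (hp : p ≠ ⊤) (hq : 0 < p.toReal) {x : Fin n → ℝ} (hx : x ≠ 0) :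
    0 < lpNorm p x := by
  rw [lpNorm_eq p hp]
  apply Real.rpow_pos_of_pos
  obtain ⟨i, hi⟩ : ∃ i, x i ≠ 0 := by
    by_contra h
    push_neg at h
    exact hx (funext h)
  exact Finset.sum_pos' (fun j _ => Real.rpow_nonneg (abs_nonneg _) _)
    ⟨i, Finset.mem_univ i, Real.rpow_pos_of_pos (abs_pos.mpr hi) _⟩

/-- Jensen: weighted power mean inequality. -/
lemma weighted_pow_bound {q : ℝ} (hq : 1 ≤ q) (w x : Fin n → ℝ)
    (hw : ∀ i, 0 ≤ w i) (hx : ∀ i, 0 ≤ x i) (hr : 0 < ∑ i, w i) :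
    (∑ i, w i * x i) ^ q ≤ (∑ i, w i) ^ (q - 1) * ∑ i, w i * x i ^ q := by
  set r := ∑ i, w i with hrdef
  have h := Real.rpow_arith_mean_le_arith_mean_rpow Finset.univ (fun i => w i / r) x
    (fun i _ => div_nonneg (hw i) hr.le)
    (by rw [← Finset.sum_div, div_self hr.ne']) (fun i _ => hx i) hq
  have h1 : ∑ i, w i / r * x i = (∑ i, w i * x i) / r := by
    rw [Finset.sum_div]; congr 1; ext i; ring
  have h2 : ∑ i, w i / r * x i ^ q = (∑ i, w i * x i ^ q) / r := by
    rw [Finset.sum_div]; congr 1; ext i; ring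
  rw [h1, h2, Real.div_rpow (Finset.sum_nonneg fun i _ => mul_nonneg (hw i) (hx i)) hr.le,
    div_le_div_iff₀ (Real.rpow_pos_of_pos hr q) hr] at h
  calc (∑ i, w i * x i) ^ q = (∑ i, w i * x i) ^ q * r / r := by field_simp
    _ ≤ (∑ i, w i * x i ^ q) * r ^ q / r := by
        have hnum : (∑ i, w i * x i) ^ q * r ≤ (∑ i, w i * x i ^ q) * r ^ q := by
          linarith [h]
        exact div_le_div_of_nonneg_right hnum hr.le
    _ = r ^ (q - 1) * ∑ i, w i * x i ^ q := by
        rw [Real.rpow_sub hr, Real.rpow_one]; ring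

end aux

section schur
variable {n : ℕ}

/-- Schur test for the ℓ_q operator norm. -/
lemma schur_bound {q : ℝ} (hq : 1 ≤ q) (A : Matrix (Fin n) (Fin n) ℝ)
    (hr : ∀ i, 0 < ∑ j, |A i j|) {K : ℝ}
    (hK : ∀ j, ∑ i, (∑ j', |A i j'|) ^ (q - 1) * |A i j| ≤ K)
    (v : Fin n → ℝ) :
    ∑ i, |A.mulVec v i| ^ q ≤ K * ∑ j, |v j| ^ q := by
  have step1 : ∀ i, |A.mulVec v i| ^ q ≤
      (∑ j', |A i j'|) ^ (q - 1) * ∑ j, |A i j| * |v j| ^ q := by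
    intro i
    have h1 : |A.mulVec v i| ≤ ∑ j, |A i j| * |v j| := by
      rw [Matrix.mulVec, dotProduct]
      refine (Finset.abs_sum_le_sum_abs _ _).trans ?_
      simp [abs_mul, le_refl]
    have h2 : |A.mulVec v i| ^ q ≤ (∑ j, |A i j| * |v j|) ^ q :=
      Real.rpow_le_rpow (abs_nonneg _) h1 (by linarith)
    refine h2.trans ?_
    exact weighted_pow_bound hq _ _ (fun j => abs_nonneg _) (fun j => abs_nonneg _) (hr i)
  calc ∑ i, |A.mulVec v i| ^ q
      ≤ ∑ i, (∑ j', |A i j'|) ^ (q - 1) * ∑ j, |A i j| * |v j| ^ q :=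
        Finset.sum_le_sum fun i _ => step1 i
    _ = ∑ j, (∑ i, (∑ j', |A i j'|) ^ (q - 1) * |A i j|) * |v j| ^ q := by
        simp_rw [Finset.mul_sum, Finset.sum_mul]
        rw [Finset.sum_comm]
        congr 1; ext j; congr 1; ext i; ring
    _ ≤ ∑ j, K * |v j| ^ q := by
        refine Finset.sum_le_sum fun j _ => ?_
        exact mul_le_mul_of_nonneg_right (hK j) (Real.rpow_nonneg (abs_nonneg _) _)
    _ = K * ∑ j, |v j| ^ q := by rw [Finset.mul_sum]

end schur

section jac
variable {n : ℕ}

lemma jac_abs {s : Fin n → ℝ} (hpos : ∀ i, 0 < s i) (hlt : ∀ i, s i < 1) (i j : Fin n) :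
    |softmaxJac s i j| = if i = j then s i * (1 - s i) else s i * s j := by
  by_cases h : i = j
  · subst h
    have hval : softmaxJac s i i = s i * (1 - s i) := by
      simp only [softmaxJac, Matrix.sub_apply, Matrix.diagonal_apply_eq,
        Matrix.vecMulVec_apply]
      ring
    rw [hval, if_pos rfl, abs_of_nonneg (by nlinarith [hpos i, hlt i])]
  · simp only [softmaxJac, Matrix.sub_apply, Matrix.diagonal_apply_ne _ h,
      Matrix.vecMulVec_apply, if_neg h]
    rw [zero_sub, abs_neg, abs_of_nonneg (by nlinarith [hpos i, hpos j])]

lemma jac_abs_symm {s : Fin n → ℝ} (hpos : ∀ i, 0 < s i) (hlt : ∀ i, s i < 1) (i j : Fin n) :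
    |softmaxJac s i j| = |softmaxJac s j i| := by
  rw [jac_abs hpos hlt, jac_abs hpos hlt]
  by_cases h : i = j
  · subst h; simp
  · rw [if_neg h, if_neg (Ne.symm h), mul_comm]

lemma jac_row_sum {s : Fin n → ℝ} (hpos : ∀ i, 0 < s i) (hlt : ∀ i, s i < 1)
    (hsum : ∑ i, s i = 1) (i : Fin n) :
    ∑ j, |softmaxJac s i j| = 2 * s i * (1 - s i) := by
  simp_rw [jac_abs hpos hlt]
  rw [← Finset.add_sum_erase _ _ (Finset.mem_univ i), if_pos rfl]
  have h2 : ∑ j ∈ Finset.univ.erase i, (if i = j then s i * (1 - s i) else s i * s j)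
      = ∑ j ∈ Finset.univ.erase i, s i * s j := by
    refine Finset.sum_congr rfl fun j hj => ?_
    rw [if_neg (Ne.symm (Finset.ne_of_mem_erase hj))]
  rw [h2, ← Finset.mul_sum, Finset.sum_erase_eq_sub (Finset.mem_univ i), hsum]
  ring

lemma key_bound {n : ℕ} (hn : 2 < n) {q : ℝ} (hq : 1 < q)
    {s : Fin n → ℝ} (hpos : ∀ i, 0 < s i) (hsum : ∑ i, s i = 1) :
    ∃ K : ℝ, 0 ≤ K ∧ K < (1 / 2) ^ q ∧
      ∀ v : Fin n → ℝ,
        ∑ i, |(softmaxJac s).mulVec v i| ^ q ≤ K * ∑ j, |v j| ^ q := by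
  have hnontriv : Nontrivial (Fin n) := Fin.nontrivial_iff_two_le.mpr (by omega)
  have hlt : ∀ i, s i < 1 := by
    intro i
    obtain ⟨j, hj⟩ := exists_ne i
    have h1 : s i + s j ≤ ∑ k, s k := by
      have : s i + s j = ∑ k ∈ ({i, j} : Finset (Fin n)), s k := by
        rw [Finset.sum_insert (by simpa using (Ne.symm hj)), Finset.sum_singleton]
      rw [this]
      exact Finset.sum_le_sum_of_subset_of_nonneg (Finset.subset_univ _)
        (fun k _ _ => (hpos k).le)
    rw [hsum] at h1
    linarith [hpos j]
  set A := softmaxJac s with hA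
  have hrow : ∀ i, ∑ j, |A i j| = 2 * s i * (1 - s i) := jac_row_sum hpos hlt hsum
  have hrpos : ∀ i, 0 < ∑ j, |A i j| := by
    intro i; rw [hrow]; nlinarith [hpos i, hlt i]
  have hrle : ∀ i, ∑ j, |A i j| ≤ 1 / 2 := by
    intro i; rw [hrow]; nlinarith [sq_nonneg (2 * s i - 1)]
  -- strict column bound
  have hcol : ∀ j, ∑ i, |A i j| = 2 * s j * (1 - s j) := by
    intro j
    rw [← hrow j]
    exact Finset.sum_congr rfl fun i _ => jac_abs_symm hpos hlt i j
  have hstrict : ∀ j, ∑ i, (∑ j', |A i j'|) ^ (q - 1) * |A i j| < (1 / 2) ^ q := by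
    intro j
    -- find i0 ≠ j with s i0 < 1/2
    obtain ⟨i0, hi0j, hi0⟩ : ∃ i0, i0 ≠ j ∧ s i0 < 1 / 2 := by
      by_contra h
      push_neg at h
      have hcard : 1 < (Finset.univ.erase j).card := by
        rw [Finset.card_erase_of_mem (Finset.mem_univ j), Finset.card_univ, Fintype.card_fin]
        omega
      obtain ⟨i1, hi1, i2, hi2, h12⟩ := Finset.one_lt_card.mp hcard
      have hi1j := Finset.ne_of_mem_erase hi1
      have hi2j := Finset.ne_of_mem_erase hi2
      have hb : s j + (s i1 + s i2) ≤ ∑ k, s k := by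
        have : s j + (s i1 + s i2) = ∑ k ∈ ({j, i1, i2} : Finset (Fin n)), s k := by
          rw [Finset.sum_insert (by simp [Ne.symm hi1j, Ne.symm hi2j]),
            Finset.sum_insert (by simpa using h12), Finset.sum_singleton]
        rw [this]
        exact Finset.sum_le_sum_of_subset_of_nonneg (Finset.subset_univ _)
          (fun k _ _ => (hpos k).le)
      rw [hsum] at hb
      have := h i1 hi1j
      have := h i2 hi2j
      linarith [hpos j]
    have hq1 : (0:ℝ) < q - 1 := by linarith
    have hAij0 : 0 < |A i0 j| := by
      rw [jac_abs hpos hlt, if_neg hi0j]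
      exact mul_pos (hpos i0) (hpos j)
    have hri0 : ∑ j', |A i0 j'| < 1 / 2 := by
      rw [hrow]
      nlinarith [mul_pos (by linarith : (0:ℝ) < 1 - 2 * s i0)
        (by linarith : (0:ℝ) < 1 - 2 * s i0)]
    have h1 : ∑ i, (∑ j', |A i j'|) ^ (q - 1) * |A i j|
        < ∑ i, (1 / 2 : ℝ) ^ (q - 1) * |A i j| := by
      refine Finset.sum_lt_sum (fun i _ => ?_) ⟨i0, Finset.mem_univ i0, ?_⟩
      · exact mul_le_mul_of_nonneg_right
          (Real.rpow_le_rpow (Finset.sum_nonneg fun k _ => abs_nonneg _) (hrle i) hq1.le)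
          (abs_nonneg _)
      · exact mul_lt_mul_of_pos_right
          (Real.rpow_lt_rpow (Finset.sum_nonneg fun k _ => abs_nonneg _) hri0 hq1) hAij0
    have h2 : ∑ i, (1 / 2 : ℝ) ^ (q - 1) * |A i j| = (1 / 2 : ℝ) ^ (q - 1) * (2 * s j * (1 - s j)) := by
      rw [← Finset.mul_sum, hcol]
    have h3 : (1 / 2 : ℝ) ^ (q - 1) * (2 * s j * (1 - s j)) ≤ (1 / 2 : ℝ) ^ (q - 1) * (1 / 2) := by
      refine mul_le_mul_of_nonneg_left ?_ (Real.rpow_nonneg (by norm_num) _)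
      nlinarith [sq_nonneg (2 * s j - 1)]
    have h4 : (1 / 2 : ℝ) ^ (q - 1) * (1 / 2) = (1 / 2 : ℝ) ^ q := by
      nth_rewrite 2 [show (1/2 : ℝ) = (1/2 : ℝ) ^ (1:ℝ) from (Real.rpow_one _).symm]
      rw [← Real.rpow_add (by norm_num : (0:ℝ) < 1/2)]
      norm_num
    calc ∑ i, (∑ j', |A i j'|) ^ (q - 1) * |A i j| < _ := h1
      _ = _ := h2
      _ ≤ _ := h3
      _ = _ := h4
  have hne : (Finset.univ : Finset (Fin n)).Nonempty := ⟨⟨0, by omega⟩, Finset.mem_univ _⟩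
  set C : Fin n → ℝ := fun j => ∑ i, (∑ j', |A i j'|) ^ (q - 1) * |A i j| with hC
  refine ⟨Finset.univ.sup' hne C, ?_, ?_, ?_⟩
  · obtain ⟨j0, hj0⟩ := hne
    refine le_trans ?_ (Finset.le_sup' C hj0)
    exact Finset.sum_nonneg fun i _ => mul_nonneg (Real.rpow_nonneg
      (Finset.sum_nonneg fun k _ => abs_nonneg _) _) (abs_nonneg _)
  · exact (Finset.sup'_lt_iff hne).mpr fun j _ => hstrict j
  · intro v
    exact schur_bound hq.le A hrpos (fun j => Finset.le_sup' C (Finset.mem_univ j)) v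

end jac

lemma norm_bound {n : ℕ} (hn : 2 < n) (p : ℝ≥0∞) (hp1 : 1 < p) (hp2 : p ≠ ⊤)
    {s : Fin n → ℝ} (hpos : ∀ i, 0 < s i) (hsum : ∑ i, s i = 1) :
    ∃ C : ℝ, 0 ≤ C ∧ C < 1 / 2 ∧
      ∀ v : Fin n → ℝ, lpNorm p ((softmaxJac s).mulVec v) ≤ C * lpNorm p v := by
  have hq : 1 < p.toReal := by
    have h := ENNReal.toReal_strict_mono hp2 hp1
    simpa using h
  set q := p.toReal with hqdef
  have hq0 : 0 < q := by linarith
  obtain ⟨K, hK0, hKlt, hKb⟩ := key_bound hn hq hpos hsum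
  refine ⟨K ^ (1/q), Real.rpow_nonneg hK0 _, ?_, ?_⟩
  · have h1 : K ^ (1/q) < ((1/2:ℝ) ^ q) ^ (1/q) :=
      Real.rpow_lt_rpow hK0 hKlt (by positivity)
    have h2 : ((1/2:ℝ) ^ q) ^ (1/q) = 1/2 := by
      rw [← Real.rpow_mul (by norm_num : (0:ℝ) ≤ 1/2), mul_one_div_cancel hq0.ne',
        Real.rpow_one]
    rwa [h2] at h1
  · intro v
    rw [lpNorm_eq p hp2, lpNorm_eq p hp2]
    have hsum1 : (0:ℝ) ≤ ∑ i, |(softmaxJac s).mulVec v i| ^ q :=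
      Finset.sum_nonneg fun i _ => Real.rpow_nonneg (abs_nonneg _) _
    have hsum2 : (0:ℝ) ≤ ∑ j, |v j| ^ q :=
      Finset.sum_nonneg fun j _ => Real.rpow_nonneg (abs_nonneg _) _
    calc (∑ i, |(softmaxJac s).mulVec v i| ^ q) ^ (1/q)
        ≤ (K * ∑ j, |v j| ^ q) ^ (1/q) :=
          Real.rpow_le_rpow hsum1 (hKb v) (by positivity)
      _ = K ^ (1/q) * (∑ j, |v j| ^ q) ^ (1/q) := Real.mul_rpow hK0 hsum2

lemma sum_two {n : ℕ} {f : Fin n → ℝ} {i0 i1 : Fin n} (h : i0 ≠ i1)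
    (hf : ∀ i, i ≠ i0 → i ≠ i1 → f i = 0) : ∑ i, f i = f i0 + f i1 := by
  rw [← Finset.sum_subset (Finset.subset_univ ({i0, i1} : Finset (Fin n)))]
  · rw [Finset.sum_insert (by simp [h]), Finset.sum_singleton]
  · intro x _ hx
    simp only [Finset.mem_insert, Finset.mem_singleton] at hx
    push_neg at hx
    exact hf x hx.1 hx.2

lemma lp_mulVec_testvec {n : ℕ} (p : ℝ≥0∞) (hp2 : p ≠ ⊤) (hq : 1 < p.toReal)
    {s : Fin n → ℝ} {i0 i1 : Fin n} (hne : i0 ≠ i1) (hsym : s i0 = s i1)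
    (hpos : 0 ≤ s i0) :
    lpNorm p ((softmaxJac s).mulVec (fun j => if j = i0 then 1 else if j = i1 then -1 else 0))
      = 2 ^ (1 / p.toReal) * s i0 ∧
    lpNorm p (fun j => if j = i0 then (1:ℝ) else if j = i1 then -1 else 0)
      = 2 ^ (1 / p.toReal) := by
  set q := p.toReal with hqdef
  have hq0 : 0 < q := by linarith
  set v : Fin n → ℝ := fun j => if j = i0 then 1 else if j = i1 then -1 else 0 with hv
  have hAv : ∀ i, (softmaxJac s).mulVec v i
      = if i = i0 then s i0 else if i = i1 then -(s i0) else 0 := by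
    intro i
    have hterm : ∀ j, j ≠ i0 → j ≠ i1 → softmaxJac s i j * v j = 0 := by
      intro j hj0 hj1
      simp [hv, hj0, hj1]
    have : (softmaxJac s).mulVec v i = softmaxJac s i i0 * v i0 + softmaxJac s i i1 * v i1 := by
      rw [Matrix.mulVec, dotProduct]
      exact sum_two hne hterm
    rw [this]
    have hv0 : v i0 = 1 := by simp [hv]
    have hv1 : v i1 = -1 := by simp [hv, Ne.symm hne]
    rw [hv0, hv1]
    have hA0 : softmaxJac s i i0 = (if i = i0 then s i else 0) - s i * s i0 := by
      by_cases h : i = i0 <;>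
        simp [softmaxJac, Matrix.diagonal_apply, Matrix.vecMulVec_apply, h]
    have hA1 : softmaxJac s i i1 = (if i = i1 then s i else 0) - s i * s i1 := by
      by_cases h : i = i1 <;>
        simp [softmaxJac, Matrix.diagonal_apply, Matrix.vecMulVec_apply, h]
    rw [hA0, hA1, ← hsym]
    by_cases h0 : i = i0
    · subst h0; rw [if_pos rfl, if_neg hne, if_pos rfl]; ring
    · by_cases h1 : i = i1
      · subst h1; rw [if_neg (Ne.symm hne), if_pos rfl, if_neg h0, if_pos rfl, ← hsym]; ring
      · rw [if_neg h0, if_neg h1, if_neg h0, if_neg h1]; ring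
  constructor
  · rw [lpNorm_eq p hp2, ← hqdef]
    have hsum : ∑ i, |(softmaxJac s).mulVec v i| ^ q = 2 * s i0 ^ q := by
      rw [sum_two hne (fun i h0 h1 => by
        rw [hAv i, if_neg h0, if_neg h1, abs_zero, Real.zero_rpow hq0.ne'])]
      rw [hAv i0, hAv i1, if_pos rfl, if_neg (Ne.symm hne), if_pos rfl,
        abs_neg, abs_of_nonneg hpos]
      ring
    rw [hsum, Real.mul_rpow (by norm_num) (Real.rpow_nonneg hpos _),
      ← Real.rpow_mul hpos, mul_one_div_cancel hq0.ne', Real.rpow_one]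
  · rw [lpNorm_eq p hp2, ← hqdef]
    have hsum : ∑ i, |v i| ^ q = 2 := by
      rw [sum_two hne (fun i h0 h1 => by
        simp [hv, h0, h1, Real.zero_rpow hq0.ne'])]
      simp [hv, Ne.symm hne, Real.one_rpow]
      norm_num
    rw [hsum]

/-- for n > 2 and 1 < p < ∞, `‖Diag(s) - s sᵀ‖_p < 1/2` on the open simplex,
the supremum over the open simplex is 1/2, and it is approached by a sequence converging
to a boundary point of the simplex. -/
theorem sup_not_attained_p_between {n : ℕ} (hn : 2 < n)
    (p : ℝ≥0∞) (hp1 : 1 < p) (hp2 : p ≠ ⊤) :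
    (∀ s ∈ openSimplex n, opNorm p (softmaxJac s) < 1 / 2) ∧
    (⨆ u : openSimplex n, opNorm p (softmaxJac (u : Fin n → ℝ))) = 1 / 2 ∧
    ∃ (sk : ℕ → Fin n → ℝ) (sb : Fin n → ℝ),
      (∀ k, sk k ∈ openSimplex n) ∧
      sb ∈ probSimplex n ∧ (∃ i, sb i = 0) ∧
      Filter.Tendsto sk Filter.atTop (nhds sb) ∧
      Filter.Tendsto (fun k => opNorm p (softmaxJac (sk k))) Filter.atTop (nhds (1 / 2)) := by
  have hq : 1 < p.toReal := by
    have h := ENNReal.toReal_strict_mono hp2 hp1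
    simpa using h
  have hq0 : (0:ℝ) < p.toReal := by linarith
  -- part 1
  have part1 : ∀ s ∈ openSimplex n, opNorm p (softmaxJac s) < 1 / 2 := by
    rintro s ⟨hpos, hsum⟩
    obtain ⟨C, hC0, hClt, hCb⟩ := norm_bound hn p hp1 hp2 hpos hsum
    haveI hnonempty : Nonempty {v : Fin n → ℝ // v ≠ 0} :=
      ⟨⟨fun _ => 1, fun h => one_ne_zero (congrFun h ⟨0, by omega⟩)⟩⟩
    refine lt_of_le_of_lt (ciSup_le ?_) hClt
    rintro ⟨v, hv⟩
    have hvpos : 0 < lpNorm p v := lpNorm_pos p hp2 hq0 hv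
    rw [div_le_iff₀ hvpos]
    exact hCb v
  -- ratios are below the opNorm
  have ratio_le : ∀ s ∈ openSimplex n, ∀ v : Fin n → ℝ, (hv : v ≠ 0) →
      lpNorm p ((softmaxJac s).mulVec v) / lpNorm p v ≤ opNorm p (softmaxJac s) := by
    rintro s ⟨hpos, hsum⟩ v hv
    obtain ⟨C, hC0, hClt, hCb⟩ := norm_bound hn p hp1 hp2 hpos hsum
    have hbdd : BddAbove (Set.range fun w : {v : Fin n → ℝ // v ≠ 0} =>
        lpNorm p ((softmaxJac s).mulVec w.val) / lpNorm p w.val) := by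
      refine ⟨C, ?_⟩
      rintro x ⟨⟨w, hw⟩, rfl⟩
      have hwpos : 0 < lpNorm p w := lpNorm_pos p hp2 hq0 hw
      rw [div_le_iff₀ hwpos]
      exact hCb w
    exact le_ciSup hbdd (⟨v, hv⟩ : {v : Fin n → ℝ // v ≠ 0})
  -- the special indices and boundary point
  set i0 : Fin n := ⟨0, by omega⟩ with hi0def
  set i1 : Fin n := ⟨1, by omega⟩ with hi1def
  have hne01 : i0 ≠ i1 := by simp [hi0def, hi1def, Fin.ext_iff]
  set v0 : Fin n → ℝ := fun j => if j = i0 then 1 else if j = i1 then -1 else 0 with hv0def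
  have hv0ne : v0 ≠ 0 := by
    intro h
    have := congrFun h i0
    simp [hv0def] at this
  set sb : Fin n → ℝ := fun i => if i = i0 ∨ i = i1 then (1:ℝ)/2 else 0 with hsbdef
  have hsb_nonneg : ∀ i, 0 ≤ sb i := by
    intro i; by_cases h : i = i0 ∨ i = i1 <;> simp [hsbdef, h]
  have hsb_sum : ∑ i, sb i = 1 := by
    rw [sum_two hne01 (fun i h0 h1 => by simp [hsbdef, h0, h1])]
    simp [hsbdef]
    norm_num
  set δ : ℕ → ℝ := fun k => 1 / ((k : ℝ) + 1) with hδdef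
  have hδpos : ∀ k, 0 < δ k := by
    intro k; simp only [hδdef]; positivity
  have hδle : ∀ k, δ k ≤ 1 := by
    intro k
    rw [hδdef, div_le_one (by positivity)]
    simp [Nat.cast_nonneg]
  have hδ0 : Filter.Tendsto δ Filter.atTop (nhds 0) :=
    tendsto_one_div_add_atTop_nhds_zero_nat
  have hnpos : (0:ℝ) < (n : ℝ) := by positivity
  set sk : ℕ → Fin n → ℝ := fun k i => (1 - δ k) * sb i + δ k / n with hskdef
  have hsk_mem : ∀ k, sk k ∈ openSimplex n := by
    intro k
    constructor
    · intro i
      have h1 : 0 ≤ (1 - δ k) * sb i :=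
        mul_nonneg (by linarith [hδle k]) (hsb_nonneg i)
      have h2 : 0 < δ k / n := div_pos (hδpos k) hnpos
      simp only [hskdef]
      linarith
    · simp only [hskdef]
      rw [Finset.sum_add_distrib, ← Finset.mul_sum, hsb_sum, Finset.sum_const,
        Finset.card_univ, Fintype.card_fin, nsmul_eq_mul]
      field_simp
      ring
  have hsk_sym : ∀ k, sk k i0 = sk k i1 := by
    intro k
    simp [hskdef, hsbdef]
  have hsk_i0 : ∀ k, sk k i0 = (1 - δ k) * (1/2) + δ k / n := by
    intro k
    simp [hskdef, hsbdef]
  -- the ratio at v0 equals sk k i0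
  have hpow_pos : (0:ℝ) < 2 ^ (1 / p.toReal) := Real.rpow_pos_of_pos (by norm_num) _
  have hratio : ∀ k, lpNorm p ((softmaxJac (sk k)).mulVec v0) / lpNorm p v0 = sk k i0 := by
    intro k
    obtain ⟨h1, h2⟩ := lp_mulVec_testvec p hp2 hq hne01 (hsk_sym k)
      (le_of_lt ((hsk_mem k).1 i0))
    rw [hv0def, h1, h2, mul_comm, mul_div_assoc, div_self hpow_pos.ne', mul_one]
  -- tendsto of sk k i0 to 1/2
  have htend_a : Filter.Tendsto (fun k => sk k i0) Filter.atTop (nhds (1/2)) := by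
    have h : Filter.Tendsto (fun k => (1 - δ k) * (1/2) + δ k / (n:ℝ)) Filter.atTop
        (nhds ((1 - 0) * (1/2) + 0 / (n:ℝ))) :=
      ((tendsto_const_nhds.sub hδ0).mul tendsto_const_nhds).add (hδ0.div_const (n:ℝ))
    rw [show (1:ℝ)/2 = (1 - 0) * (1/2) + 0 / (n:ℝ) by norm_num]
    exact Filter.Tendsto.congr (fun k => (hsk_i0 k).symm) h
  -- lower bounds
  have hlower : ∀ k, sk k i0 ≤ opNorm p (softmaxJac (sk k)) := by
    intro k
    rw [← hratio k]
    exact ratio_le (sk k) (hsk_mem k) v0 hv0ne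
  -- tendsto of opNorm
  have htend_op : Filter.Tendsto (fun k => opNorm p (softmaxJac (sk k)))
      Filter.atTop (nhds (1/2)) := by
    refine tendsto_of_tendsto_of_tendsto_of_le_of_le htend_a tendsto_const_nhds
      hlower (fun k => (part1 (sk k) (hsk_mem k)).le)
  refine ⟨part1, ?_, ?_⟩
  · -- the supremum
    haveI : Nonempty (openSimplex n) := ⟨⟨sk 0, hsk_mem 0⟩⟩
    have hbdd : BddAbove (Set.range fun u : openSimplex n =>
        opNorm p (softmaxJac (u : Fin n → ℝ))) := by
      refine ⟨1/2, ?_⟩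
      rintro x ⟨u, rfl⟩
      exact (part1 u u.2).le
    apply le_antisymm
    · exact ciSup_le fun u => (part1 u u.2).le
    · refine le_of_tendsto htend_op (Filter.Eventually.of_forall fun k => ?_)
      exact le_ciSup hbdd (⟨sk k, hsk_mem k⟩ : openSimplex n)
  · refine ⟨sk, sb, hsk_mem, ⟨hsb_nonneg, hsb_sum⟩, ?_, ?_, htend_op⟩
    · refine ⟨⟨2, hn⟩, ?_⟩
      have h0 : (⟨2, hn⟩ : Fin n) ≠ i0 := by simp [hi0def, Fin.ext_iff]
      have h1 : (⟨2, hn⟩ : Fin n) ≠ i1 := by simp [hi1def, Fin.ext_iff]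
      simp [hsbdef, h0, h1]
    · rw [tendsto_pi_nhds]
      intro i
      have h : Filter.Tendsto (fun k => (1 - δ k) * sb i + δ k / (n:ℝ)) Filter.atTop
          (nhds ((1 - 0) * sb i + 0 / (n:ℝ))) :=
        ((tendsto_const_nhds.sub hδ0).mul tendsto_const_nhds).add (hδ0.div_const (n:ℝ))
      have heq : sb i = (1 - 0) * sb i + 0 / (n:ℝ) := by norm_num
      rw [heq]
      exact h
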